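/- Let S ⊆ ℤ³ be the union over all positive integers m of the sets { (⌊(−x − z : ℚ)/m⌋, ⌊(x − y : ℚ)/m⌋, ⌊(−x : ℚ)/m⌋) : x, y, z ∈ ℤ, 0 ≤ x < m, 0 ≤ y < m, 0 ≤ z < m }. Then S = { (0,0,0), (0,−1,0), (−1,0,0), (−1,−1,0), (−1,0,−1), (−1,−1,−1), (−2,0,−1), (−2,−1,−1) }; in particular S has exactly 8 elements. -/
import Mathlib

private lemma floorQ (a m : ℤ) (hm : 0 < m) : ⌊(a : ℚ) / (m : ℚ)⌋ = a / m := by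
  lift m to ℕ using hm.le
  exact_mod_cast Rat.floor_intCast_div_natCast a m

private lemma edv (m q r : ℤ) (h0 : 0 ≤ r) (h1 : r < m) : (r + m * q) / m = q := by
  rw [Int.add_mul_ediv_left _ _ (by omega : m ≠ 0),
    Int.ediv_eq_zero_of_lt h0 h1, zero_add]

set_option maxHeartbeats 1600000 in
/-- §4.5: the set `𝔇` of Thomsen coefficient triples on the toric Fano 3-fold
of type (8). -/
theorem stmt_11 :
    {p : ℤ × ℤ × ℤ | ∃ m : ℤ, 0 < m ∧ ∃ x y z : ℤ,
        0 ≤ x ∧ x < m ∧ 0 ≤ y ∧ y < m ∧ 0 ≤ z ∧ z < m ∧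
        p = (⌊((-x - z : ℤ) : ℚ) / (m : ℚ)⌋, ⌊((x - y : ℤ) : ℚ) / (m : ℚ)⌋,
             ⌊((-x : ℤ) : ℚ) / (m : ℚ)⌋)} =
      ({(0, 0, 0), (0, -1, 0), (-1, 0, 0), (-1, -1, 0), (-1, 0, -1),
        (-1, -1, -1), (-2, 0, -1), (-2, -1, -1)} : Set (ℤ × ℤ × ℤ)) ∧
    Set.ncard {p : ℤ × ℤ × ℤ | ∃ m : ℤ, 0 < m ∧ ∃ x y z : ℤ,
        0 ≤ x ∧ x < m ∧ 0 ≤ y ∧ y < m ∧ 0 ≤ z ∧ z < m ∧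
        p = (⌊((-x - z : ℤ) : ℚ) / (m : ℚ)⌋, ⌊((x - y : ℤ) : ℚ) / (m : ℚ)⌋,
             ⌊((-x : ℤ) : ℚ) / (m : ℚ)⌋)} = 8 := by
  have hset : {p : ℤ × ℤ × ℤ | ∃ m : ℤ, 0 < m ∧ ∃ x y z : ℤ,
        0 ≤ x ∧ x < m ∧ 0 ≤ y ∧ y < m ∧ 0 ≤ z ∧ z < m ∧
        p = (⌊((-x - z : ℤ) : ℚ) / (m : ℚ)⌋, ⌊((x - y : ℤ) : ℚ) / (m : ℚ)⌋,
             ⌊((-x : ℤ) : ℚ) / (m : ℚ)⌋)} =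
      ({(0, 0, 0), (0, -1, 0), (-1, 0, 0), (-1, -1, 0), (-1, 0, -1),
        (-1, -1, -1), (-2, 0, -1), (-2, -1, -1)} : Set (ℤ × ℤ × ℤ)) := by
    ext p
    constructor
    · rintro ⟨m, hm, x, y, z, hx0, hxm, hy0, hym, hz0, hzm, rfl⟩
      rw [floorQ _ _ hm, floorQ _ _ hm, floorQ _ _ hm]
      have e6 : (-x) / m = if x = 0 then 0 else -1 := by
        split
        · next h => rw [show -x = 0 + m * 0 by omega]; exact edv m 0 0 le_rfl hm
        · next h => rw [show -x = (m - x) + m * (-1) by ring]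
                    exact edv m (-1) (m - x) (by omega) (by omega)
      have e5 : (x - y) / m = if y ≤ x then 0 else -1 := by
        split
        · next h => rw [show x - y = (x - y) + m * 0 by ring]
                    exact edv m 0 (x - y) (by omega) (by omega)
        · next h => rw [show x - y = (x - y + m) + m * (-1) by ring]
                    exact edv m (-1) (x - y + m) (by omega) (by omega)
      have e4 : (-x - z) / m = if x = 0 ∧ z = 0 then 0 else if x + z ≤ m then -1 else -2 := by
        split
        · next h => rw [show -x - z = 0 + m * 0 by omega]; exact edv m 0 0 le_rfl hm
        · next h =>
          split
          · next h' => rw [show -x - z = (m - x - z) + m * (-1) by ring]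
                       exact edv m (-1) (m - x - z) (by omega) (by omega)
          · next h' => rw [show -x - z = (2 * m - x - z) + m * (-2) by ring]
                       exact edv m (-2) (2 * m - x - z) (by omega) (by omega)
      rw [e4, e5, e6]
      split_ifs <;> first
        | (norm_num [Set.mem_insert_iff]; done)
        | omega
    · intro hp
      simp only [Set.mem_insert_iff, Set.mem_singleton_iff] at hp
      rcases hp with rfl | rfl | rfl | rfl | rfl | rfl | rfl | rfl
      · exact ⟨1, by norm_num, 0, 0, 0, by norm_num, by norm_num, by norm_num,
          by norm_num, by norm_num, by norm_num, by
            rw [floorQ _ _ (by norm_num), floorQ _ _ (by norm_num), floorQ _ _ (by norm_num)]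
            decide⟩
      · exact ⟨2, by norm_num, 0, 1, 0, by norm_num, by norm_num, by norm_num,
          by norm_num, by norm_num, by norm_num, by
            rw [floorQ _ _ (by norm_num), floorQ _ _ (by norm_num), floorQ _ _ (by norm_num)]
            decide⟩
      · exact ⟨2, by norm_num, 0, 0, 1, by norm_num, by norm_num, by norm_num,
          by norm_num, by norm_num, by norm_num, by
            rw [floorQ _ _ (by norm_num), floorQ _ _ (by norm_num), floorQ _ _ (by norm_num)]
            decide⟩
      · exact ⟨2, by norm_num, 0, 1, 1, by norm_num, by norm_num, by norm_num,
          by norm_num, by norm_num, by norm_num, by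
            rw [floorQ _ _ (by norm_num), floorQ _ _ (by norm_num), floorQ _ _ (by norm_num)]
            decide⟩
      · exact ⟨2, by norm_num, 1, 0, 0, by norm_num, by norm_num, by norm_num,
          by norm_num, by norm_num, by norm_num, by
            rw [floorQ _ _ (by norm_num), floorQ _ _ (by norm_num), floorQ _ _ (by norm_num)]
            decide⟩
      · exact ⟨3, by norm_num, 1, 2, 0, by norm_num, by norm_num, by norm_num,
          by norm_num, by norm_num, by norm_num, by
            rw [floorQ _ _ (by norm_num), floorQ _ _ (by norm_num), floorQ _ _ (by norm_num)]
            decide⟩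
      · exact ⟨3, by norm_num, 2, 0, 2, by norm_num, by norm_num, by norm_num,
          by norm_num, by norm_num, by norm_num, by
            rw [floorQ _ _ (by norm_num), floorQ _ _ (by norm_num), floorQ _ _ (by norm_num)]
            decide⟩
      · exact ⟨4, by norm_num, 2, 3, 3, by norm_num, by norm_num, by norm_num,
          by norm_num, by norm_num, by norm_num, by
            rw [floorQ _ _ (by norm_num), floorQ _ _ (by norm_num), floorQ _ _ (by norm_num)]
            decide⟩
  refine ⟨hset, ?_⟩
  rw [hset]
  rw [show ({(0, 0, 0), (0, -1, 0), (-1, 0, 0), (-1, -1, 0), (-1, 0, -1),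
        (-1, -1, -1), (-2, 0, -1), (-2, -1, -1)} : Set (ℤ × ℤ × ℤ)) =
      (↑({(0, 0, 0), (0, -1, 0), (-1, 0, 0), (-1, -1, 0), (-1, 0, -1),
        (-1, -1, -1), (-2, 0, -1), (-2, -1, -1)} : Finset (ℤ × ℤ × ℤ)) : Set (ℤ × ℤ × ℤ))
      from by simp]
  rw [Set.ncard_coe_finset]
  decide
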